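/- arXiv:1812.08418 — 3 statements merged into one kernel-verified Lean document; each statement's English description precedes it below -/
import Mathlib

section
/- Let N ≥ 3, p > 1 with 1 < p < N/(N-2), K = ((N-2)p - N)/(p-1) < 0, and μ* = (p+1)·((N-(N-2)p)/(2p))^(p/(p+1)). If -μ* < M < 0, then the function f_M(y) = ((p-1)/2)^p y^(p-1) + M y^((p-1)/(p+1)) - K has no positive root. -/
theorem stmt_1 (N : ℕ) (hN : 3 ≤ N) (p : ℝ) (hp : 1 < p)
    (hpN : p < (N : ℝ) / (N - 2)) (K : ℝ) (hK : K = (((N : ℝ) - 2) * p - N) / (p - 1))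
    (μs : ℝ) (hμ : μs = (p + 1) * (((N : ℝ) - (N - 2) * p) / (2 * p)) ^ (p / (p + 1)))
    (M : ℝ) (hM1 : -μs < M) (hM2 : M < 0) :
    ∀ y : ℝ, 0 < y →
      ((p - 1) / 2) ^ p * y ^ (p - 1) + M * y ^ ((p - 1) / (p + 1)) - K ≠ 0 := by
  intro y hy
  have hp0 : (0:ℝ) < p := by linarith
  have hp1 : (0:ℝ) < p - 1 := by linarith
  have hp1' : (0:ℝ) < p + 1 := by linarith
  have hN3 : (3:ℝ) ≤ (N:ℝ) := by exact_mod_cast hN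
  have hN2 : (0:ℝ) < (N:ℝ) - 2 := by linarith
  have hc0 : 0 < (N:ℝ) - ((N:ℝ) - 2) * p := by
    have := (lt_div_iff₀ hN2).mp hpN
    nlinarith
  set c : ℝ := ((N:ℝ) - ((N:ℝ) - 2) * p) / (2 * p) with hcdef
  have hc : 0 < c := by positivity
  set a : ℝ := ((p - 1) / 2) ^ p with hadef
  have hb2 : (0:ℝ) < (p - 1) / 2 := by positivity
  have ha : 0 < a := Real.rpow_pos_of_pos hb2 p
  set q : ℝ := (p + 1) / p with hqdef
  have hq0 : 0 < q := by positivity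
  set ε : ℝ := (a * (p + 1)) ^ ((p + 1)⁻¹) with hεdef
  have hε : 0 < ε := Real.rpow_pos_of_pos (by positivity) _
  set t : ℝ := y ^ ((p - 1) / (p + 1)) with htdef
  have ht : 0 < t := Real.rpow_pos_of_pos hy _
  have hM : 0 < -M := by linarith
  have hμs : -M < μs := by linarith
  -- rewrite y ^ (p-1) as t ^ (p+1)
  have hyt : y ^ (p - 1) = t ^ (p + 1) := by
    rw [htdef, ← Real.rpow_mul hy.le]
    congr 1
    field_simp
  -- Young's inequality
  have hconj : (p + 1).HolderConjugate q := by
    rw [Real.holderConjugate_iff]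
    constructor
    · linarith
    · rw [hqdef, inv_div]
      field_simp
      ring
  have hyoung := Real.young_inequality_of_nonneg
    (mul_nonneg hε.le ht.le) (div_nonneg hM.le hε.le) hconj
  -- simplify LHS of Young
  have hL : (ε * t) * ((-M) / ε) = -M * t := by
    field_simp
  -- simplify the first RHS term
  have hεp : ε ^ (p + 1) = a * (p + 1) := by
    rw [hεdef, ← Real.rpow_mul (by positivity), inv_mul_cancel₀ (by linarith), Real.rpow_one]
  have hR1 : (ε * t) ^ (p + 1) / (p + 1) = a * t ^ (p + 1) := by
    rw [Real.mul_rpow hε.le ht.le, hεp]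
    field_simp
  set D : ℝ := ((-M) / ε) ^ q / q with hDdef
  have hyoung' : -M * t ≤ a * t ^ (p + 1) + D := by
    rw [hL, hR1] at hyoung
    exact hyoung
  -- now bound D < -K
  have hεq : ε ^ q = (p - 1) / 2 * (p + 1) ^ (1 / p) := by
    rw [hεdef, ← Real.rpow_mul (by positivity)]
    have : (p + 1)⁻¹ * q = 1 / p := by
      rw [hqdef]; field_simp
    rw [this, Real.mul_rpow ha.le hp1'.le, hadef, ← Real.rpow_mul hb2.le,
      mul_one_div, div_self hp0.ne', Real.rpow_one]
  have hμq : μs ^ q = (p + 1) ^ (1 / p) * (p + 1) * c := by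
    rw [hμ, Real.mul_rpow hp1'.le (Real.rpow_nonneg (by positivity) _),
      ← Real.rpow_mul (by positivity)]
    have h1 : p / (p + 1) * q = 1 := by rw [hqdef]; field_simp
    have h2 : (q : ℝ) = 1 / p + 1 := by rw [hqdef]; field_simp; ring
    rw [h1, Real.rpow_one, h2, Real.rpow_add hp1', Real.rpow_one]
  have hKneg : -K = 2 * p * c / (p - 1) := by
    rw [hK, hcdef]
    field_simp
    ring
  have hμpos : 0 < μs := lt_trans hM hμs
  have hDlt : D < -K := by
    have heq : (μs / ε) ^ q / q = -K := by
      rw [Real.div_rpow hμpos.le hε.le, hμq, hεq, hKneg, hqdef]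
      have hs : 0 < (p + 1) ^ (1 / p) := Real.rpow_pos_of_pos hp1' _
      field_simp
    have h2 : D < (μs / ε) ^ q / q := by
      rw [hDdef]
      have hxy : (-M / ε) ^ q < (μs / ε) ^ q :=
        Real.rpow_lt_rpow (by positivity) (by gcongr) hq0
      exact (div_lt_div_iff_of_pos_right hq0).mpr hxy
    linarith
  have hpos : 0 < a * t ^ (p + 1) + M * t - K := by nlinarith [hyoung', hDlt]
  rw [hyt]
  exact hpos.ne'
end

section
/- Let N ≥ 1, p > 1, K = ((N-2)p - N)/(p-1), L = K - 2/(p-1), and M ∈ ℝ. Define J(x,y) = K x²/(p-1) - |x|^(p+1)/(p+1) - M (2/(p-1))^(2p/(p+1)) (p+1)|x|^((3p+1)/(p+1))/(3p+1) - (1/2)(2x/(p-1) - y)². If (x(t), y(t)) solves x_t = 2x/(p-1) - y, y_t = -Ky + |x|^(p-1)x + M|y|^(2p/(p+1)) and stays in the open first quadrant, then the derivative of V(t) = J(x(t), y(t)) equals L(2x/(p-1) - y)² - M((2x/(p-1))^(2p/(p+1)) - y^(2p/(p+1)))(2x/(p-1) - y). -/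
set_option maxHeartbeats 1000000 in
theorem stmt_11 (N : ℕ) (hN : 1 ≤ N) (p : ℝ) (hp : 1 < p) (M : ℝ)
    (K L : ℝ) (hK : K = (((N : ℝ) - 2) * p - N) / (p - 1)) (hL : L = K - 2 / (p - 1))
    (J : ℝ → ℝ → ℝ)
    (hJ : ∀ a b : ℝ, J a b = K * a ^ 2 / (p - 1) - |a| ^ (p + 1) / (p + 1)
        - M * (2 / (p - 1)) ^ (2 * p / (p + 1)) * ((p + 1) * |a| ^ ((3 * p + 1) / (p + 1)) / (3 * p + 1))
        - (1 / 2) * (2 * a / (p - 1) - b) ^ 2)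
    (x y : ℝ → ℝ) (t : ℝ)
    (hx : HasDerivAt x (2 * x t / (p - 1) - y t) t)
    (hy : HasDerivAt y (-K * y t + |x t| ^ (p - 1) * x t + M * |y t| ^ (2 * p / (p + 1))) t)
    (hxpos : 0 < x t) (hypos : 0 < y t) :
    HasDerivAt (fun s => J (x s) (y s))
      (L * (2 * x t / (p - 1) - y t) ^ 2
        - M * ((2 * x t / (p - 1)) ^ (2 * p / (p + 1)) - (y t) ^ (2 * p / (p + 1)))
          * (2 * x t / (p - 1) - y t)) t := by
  have hp1 : (0:ℝ) < p - 1 := by linarith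
  have hp2 : (0:ℝ) < p + 1 := by linarith
  have h3p : (0:ℝ) < 3 * p + 1 := by linarith
  set x' : ℝ := 2 * x t / (p - 1) - y t with hx'
  set y' : ℝ := -K * y t + |x t| ^ (p - 1) * x t + M * |y t| ^ (2 * p / (p + 1)) with hy'
  set C : ℝ := (2 / (p - 1)) ^ (2 * p / (p + 1)) with hC
  set q : ℝ := (3 * p + 1) / (p + 1) with hq
  -- eventually x s > 0
  have hev : ∀ᶠ s in nhds t, 0 < x s :=
    hx.continuousAt.eventually (eventually_gt_nhds hxpos)
  have d1 : HasDerivAt (fun s => K * x s ^ 2 / (p - 1))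
      (K * ((2:ℕ) * x t ^ 1 * x') / (p - 1)) t :=
    ((hx.pow 2).const_mul K).div_const (p - 1)
  have d2 : HasDerivAt (fun s => x s ^ (p + 1) / (p + 1))
      (x' * (p + 1) * x t ^ (p + 1 - 1) / (p + 1)) t :=
    (hx.rpow_const (Or.inl hxpos.ne')).div_const (p + 1)
  have d3 : HasDerivAt (fun s => M * C * ((p + 1) * x s ^ q / (3 * p + 1)))
      (M * C * ((p + 1) * (x' * q * x t ^ (q - 1)) / (3 * p + 1))) t :=
    (((hx.rpow_const (Or.inl hxpos.ne')).const_mul (p + 1)).div_const (3 * p + 1)).const_mul (M * C)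
  have d4 : HasDerivAt (fun s => (1 / 2) * (2 * x s / (p - 1) - y s) ^ 2)
      ((1 / 2) * ((2:ℕ) * (2 * x t / (p - 1) - y t) ^ 1 * (2 * x' / (p - 1) - y'))) t :=
    ((((hx.const_mul 2).div_const (p - 1)).sub hy).pow 2).const_mul (1 / 2)
  have dd : HasDerivAt (fun s => K * x s ^ 2 / (p - 1) - x s ^ (p + 1) / (p + 1)
      - M * C * ((p + 1) * x s ^ q / (3 * p + 1))
      - (1 / 2) * (2 * x s / (p - 1) - y s) ^ 2)
      (K * ((2:ℕ) * x t ^ 1 * x') / (p - 1)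
        - x' * (p + 1) * x t ^ (p + 1 - 1) / (p + 1)
        - M * C * ((p + 1) * (x' * q * x t ^ (q - 1)) / (3 * p + 1))
        - (1 / 2) * ((2:ℕ) * (2 * x t / (p - 1) - y t) ^ 1 * (2 * x' / (p - 1) - y'))) t :=
    ((d1.sub d2).sub d3).sub d4
  have heq : (fun s => J (x s) (y s)) =ᶠ[nhds t] (fun s => K * x s ^ 2 / (p - 1)
      - x s ^ (p + 1) / (p + 1) - M * C * ((p + 1) * x s ^ q / (3 * p + 1))
      - (1 / 2) * (2 * x s / (p - 1) - y s) ^ 2) := by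
    filter_upwards [hev] with s hs
    rw [hJ, abs_of_pos hs]
  have dd' := dd.congr_of_eventuallyEq heq
  convert dd' using 1
  case e'_4 => rfl
  case e'_5 => rfl
  -- now prove the derivative values are equal
  have e1 : x t ^ (p + 1 - 1) = x t ^ p := by norm_num
  have e2 : q - 1 = 2 * p / (p + 1) := by
    rw [hq]; field_simp; ring
  have e3 : (p + 1) * q = 3 * p + 1 := by
    rw [hq]; field_simp
  have e4 : C * x t ^ (2 * p / (p + 1)) = (2 * x t / (p - 1)) ^ (2 * p / (p + 1)) := by
    rw [hC, ← Real.mul_rpow (by positivity) hxpos.le]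
    congr 1
    ring
  have e5 : |x t| ^ (p - 1) * x t = x t ^ p := by
    rw [abs_of_pos hxpos]
    nth_rewrite 2 [show x t = x t ^ (1:ℝ) from (Real.rpow_one _).symm]
    rw [← Real.rpow_add hxpos]
    norm_num
  have e6 : |y t| ^ (2 * p / (p + 1)) = y t ^ (2 * p / (p + 1)) := by
    rw [abs_of_pos hypos]
  rw [e1, e2]
  rw [hy', e5, e6]
  have hxne : p - 1 ≠ 0 := hp1.ne'
  have hxne2 : p + 1 ≠ 0 := hp2.ne'
  have h3ne : 3 * p + 1 ≠ 0 := h3p.ne'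
  have key : M * C * ((p + 1) * (x' * q * x t ^ (2 * p / (p + 1))) / (3 * p + 1))
      = M * (2 * x t / (p - 1)) ^ (2 * p / (p + 1)) * x' := by
    rw [← e4]
    field_simp
    linear_combination (M * C * x') * e3
  rw [key, hL]
  set A := x t ^ p with hA
  set B := (2 * x t / (p - 1)) ^ (2 * p / (p + 1)) with hB
  set D := y t ^ (2 * p / (p + 1)) with hD
  rw [hx']
  field_simp
  ring
end

section
/- Let N ≥ 1, p > 1, M < 0, and suppose the sum (2x/(p-1))^(2p/(p+1)) - y^(2p/(p+1)) has the same sign as 2x/(p-1) - y for x, y > 0 (which holds since t ↦ t^(2p/(p+1)) is strictly increasing). If moreover p ≥ (N+2)/(N-2) (so L ≥ 0), then along any solution of the system staying in the first quadrant, the function V(t) = J(x(t),y(t)) of the previous lemma is nondecreasing. -/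
lemma rpow_sign_aux (u b q : ℝ) (hu : 0 < u) (hb : 0 < b) (hq : 0 ≤ q) :
    0 ≤ (u ^ q - b ^ q) * (u - b) := by
  rcases le_total b u with h | h
  · exact mul_nonneg (sub_nonneg.2 (Real.rpow_le_rpow hb.le h hq)) (sub_nonneg.2 h)
  · have := Real.rpow_le_rpow hu.le h hq
    nlinarith

theorem stmt_12 (N : ℕ) (hN : 1 ≤ N) (p : ℝ) (hp : 1 < p) (M : ℝ) (hM : M < 0)
    (hpc : ((N : ℝ) + 2) / ((N : ℝ) - 2) ≤ p)
    (K L : ℝ) (hK : K = (((N : ℝ) - 2) * p - N) / (p - 1)) (hL : L = K - 2 / (p - 1))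
    (hL0 : 0 ≤ L)
    (J : ℝ → ℝ → ℝ)
    (hJ : ∀ a b : ℝ, J a b = K * a ^ 2 / (p - 1) - |a| ^ (p + 1) / (p + 1)
        - M * (2 / (p - 1)) ^ (2 * p / (p + 1)) * ((p + 1) * |a| ^ ((3 * p + 1) / (p + 1)) / (3 * p + 1))
        - (1 / 2) * (2 * a / (p - 1) - b) ^ 2)
    (x y : ℝ → ℝ)
    (hx : ∀ t, HasDerivAt x (2 * x t / (p - 1) - y t) t)
    (hy : ∀ t, HasDerivAt y (-K * y t + |x t| ^ (p - 1) * x t + M * |y t| ^ (2 * p / (p + 1))) t)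
    (hQ : ∀ t, 0 < x t ∧ 0 < y t) :
    Monotone (fun t => J (x t) (y t)) := by
  have hp1 : (0:ℝ) < p - 1 := by linarith
  have hpp1 : (0:ℝ) < p + 1 := by linarith
  have h3p1 : (0:ℝ) < 3 * p + 1 := by linarith
  set q : ℝ := 2 * p / (p + 1) with hq
  have hq0 : 0 ≤ q := by positivity
  set c : ℝ := (2 / (p - 1)) ^ q with hc
  have hfun : (fun t => J (x t) (y t)) =
      (fun t => K * x t ^ 2 / (p - 1) - x t ^ (p + 1) / (p + 1)
        - M * c * ((p + 1) * x t ^ ((3 * p + 1) / (p + 1)) / (3 * p + 1))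
        - (1 / 2) * (2 * x t / (p - 1) - y t) ^ 2) := by
    funext t
    rw [hJ, abs_of_pos (hQ t).1]
  rw [hfun]
  have key : ∀ t, HasDerivAt (fun t => K * x t ^ 2 / (p - 1) - x t ^ (p + 1) / (p + 1)
        - M * c * ((p + 1) * x t ^ ((3 * p + 1) / (p + 1)) / (3 * p + 1))
        - (1 / 2) * (2 * x t / (p - 1) - y t) ^ 2)
      (L * (2 * x t / (p - 1) - y t) ^ 2
        - M * ((2 * x t / (p - 1)) ^ q - y t ^ q) * (2 * x t / (p - 1) - y t)) t := by
    intro t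
    obtain ⟨hx0, hy0⟩ := hQ t
    have hy' := hy t
    rw [abs_of_pos hx0, abs_of_pos hy0] at hy'
    have h1 : HasDerivAt (fun t => K * x t ^ 2 / (p - 1))
        (K * ((2:ℕ) * x t ^ (2 - 1) * (2 * x t / (p - 1) - y t)) / (p - 1)) t :=
      (((hx t).pow 2).const_mul K).div_const _
    have h2 : HasDerivAt (fun t => x t ^ (p + 1) / (p + 1))
        (((2 * x t / (p - 1) - y t) * (p + 1) * x t ^ (p + 1 - 1)) / (p + 1)) t :=
      ((hx t).rpow_const (Or.inl hx0.ne')).div_const _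
    have h3 : HasDerivAt (fun t => M * c * ((p + 1) * x t ^ ((3 * p + 1) / (p + 1)) / (3 * p + 1)))
        (M * c * ((p + 1) * ((2 * x t / (p - 1) - y t) * ((3 * p + 1) / (p + 1)) *
          x t ^ ((3 * p + 1) / (p + 1) - 1)) / (3 * p + 1))) t :=
      ((((hx t).rpow_const (Or.inl hx0.ne')).const_mul (p + 1)).div_const _).const_mul _
    have hin : HasDerivAt (fun t => 2 * x t / (p - 1) - y t)
        (2 * (2 * x t / (p - 1) - y t) / (p - 1) -
          (-K * y t + x t ^ (p - 1) * x t + M * y t ^ q)) t :=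
      (((hx t).const_mul 2).div_const _).sub hy'
    have h4 : HasDerivAt (fun t => (1 / 2) * (2 * x t / (p - 1) - y t) ^ 2)
        ((1 / 2) * ((2:ℕ) * (2 * x t / (p - 1) - y t) ^ (2 - 1) *
          (2 * (2 * x t / (p - 1) - y t) / (p - 1) -
            (-K * y t + x t ^ (p - 1) * x t + M * y t ^ q)))) t :=
      (hin.pow 2).const_mul _
    have h := ((h1.sub h2).sub h3).sub h4
    refine h.congr_deriv ?_
    have ha1 : x t ^ (p + 1 - 1) = x t ^ p := by norm_num
    have har : x t ^ ((3 * p + 1) / (p + 1) - 1) = x t ^ q := by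
      rw [hq, div_sub_one hpp1.ne']
      congr 1
      ring
    have hap : x t ^ (p - 1) * x t = x t ^ p := by
      rw [← Real.rpow_add_one hx0.ne']
      norm_num
    have hcu : (2 * x t / (p - 1)) ^ q = c * x t ^ q := by
      rw [hc, ← Real.mul_rpow (by positivity) hx0.le]
      congr 1
      ring
    rw [ha1, har, hap, hcu, hL]
    push_cast
    field_simp
    ring
  have hdiff : Differentiable ℝ (fun t => K * x t ^ 2 / (p - 1) - x t ^ (p + 1) / (p + 1)
        - M * c * ((p + 1) * x t ^ ((3 * p + 1) / (p + 1)) / (3 * p + 1))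
        - (1 / 2) * (2 * x t / (p - 1) - y t) ^ 2) := fun t => (key t).differentiableAt
  apply monotone_of_deriv_nonneg hdiff
  intro t
  rw [(key t).deriv]
  obtain ⟨hx0, hy0⟩ := hQ t
  have hu : 0 < 2 * x t / (p - 1) := by positivity
  have h1 : 0 ≤ L * (2 * x t / (p - 1) - y t) ^ 2 := mul_nonneg hL0 (sq_nonneg _)
  have h2 : 0 ≤ ((2 * x t / (p - 1)) ^ q - y t ^ q) * (2 * x t / (p - 1) - y t) :=
    rpow_sign_aux _ _ _ hu hy0 hq0
  nlinarith
end
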